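/- arXiv:1005.2321 — 4 statements merged into one kernel-verified Lean document; each statement's English description precedes it below -/
import Mathlib

section
/- Let (x_k) be a sequence in a Polish space E_X converging to x, and let W be a Markov kernel from E_X to a Polish space E_Y such that W(·|x_k) converges weakly to W(·|x) (weak* continuity). Then for any sequence of probability measures P_k on E_X converging weakly to P_X, the joint measures P_k ⊗ W converge weakly to P_X ⊗ W on E_X × E_Y. -/
open MeasureTheory ProbabilityTheory Filter Topology
open scoped NNReal ENNReal

/-- Weak (weak*) convergence of measures. -/
def WeakTendsto {E : Type*} [MeasurableSpace E] [TopologicalSpace E]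
    (μs : ℕ → Measure E) (μ : Measure E) : Prop :=
  ∀ f : BoundedContinuousFunction E ℝ,
    Tendsto (fun n => ∫ x, f x ∂(μs n)) atTop (𝓝 (∫ x, f x ∂μ))

section Aux

variable {EX EY : Type*}
    [MetricSpace EX] [TopologicalSpace.SeparableSpace EX]
    [MeasurableSpace EX] [BorelSpace EX]
    [MetricSpace EY] [TopologicalSpace.SeparableSpace EY]
    [MeasurableSpace EY] [BorelSpace EY]

/-- Key step: for bounded continuous functions on the product which are Lipschitz in the
first variable uniformly in the second, the integrals against `Pk k ⊗ₘ W` converge. -/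
lemma csiszar_key_tendsto
    (W : Kernel EX EY) [IsMarkovKernel W]
    (hW : ∀ (x : EX) (xk : ℕ → EX), Tendsto xk atTop (𝓝 x) →
      WeakTendsto (fun k => W (xk k)) (W x))
    (PX : Measure EX) [IsProbabilityMeasure PX]
    (Pk : ℕ → Measure EX) [∀ k, IsProbabilityMeasure (Pk k)]
    (hP : WeakTendsto Pk PX)
    (f : BoundedContinuousFunction (EX × EY) ℝ) (L : ℝ)
    (hfL : ∀ x x' y, |f (x, y) - f (x', y)| ≤ L * dist x x') :
    Tendsto (fun k => ∫ z, f z ∂((Pk k) ⊗ₘ W)) atTop (𝓝 (∫ z, f z ∂(PX ⊗ₘ W))) := by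
  classical
  haveI : SecondCountableTopology EX := UniformSpace.secondCountable_of_separable EX
  haveI : SecondCountableTopology EY := UniformSpace.secondCountable_of_separable EY
  -- slice functions
  set fx : EX → BoundedContinuousFunction EY ℝ :=
    fun x => f.compContinuous ⟨fun y => (x, y), (Continuous.prodMk_right x)⟩ with hfxdef
  have fx_apply : ∀ x y, fx x y = f (x, y) := fun x y => rfl
  set g : EX → ℝ := fun x => ∫ y, fx x y ∂(W x) with hgdef
  have hgb : ∀ x, ‖g x‖ ≤ ‖f‖ := by
    intro x
    calc ‖g x‖ ≤ ∫ y, ‖fx x y‖ ∂(W x) := norm_integral_le_integral_norm _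
    _ ≤ ∫ _, ‖f‖ ∂(W x) := by
        refine integral_mono ((fx x).integrable _).norm (integrable_const _) ?_
        intro y
        exact f.norm_coe_le_norm (x, y)
    _ = ‖f‖ := by simp
  have hgc : Continuous g := by
    apply continuous_iff_seqContinuous.mpr
    intro xk x hxk
    have h2 : Tendsto (fun k => ∫ y, (fx x) y ∂(W (xk k))) atTop (𝓝 (∫ y, (fx x) y ∂(W x))) :=
      hW x xk hxk (fx x)
    have bound : ∀ k, |g (xk k) - g x| ≤
        L * dist (xk k) x + |(∫ y, (fx x) y ∂(W (xk k))) - ∫ y, (fx x) y ∂(W x)| := by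
      intro k
      have e1 : g (xk k) - g x = (∫ y, ((fx (xk k)) y - (fx x) y) ∂(W (xk k)))
          + ((∫ y, (fx x) y ∂(W (xk k))) - ∫ y, (fx x) y ∂(W x)) := by
        rw [integral_sub ((fx (xk k)).integrable _) ((fx x).integrable _)]
        simp only [hgdef]
        ring
      rw [e1]
      refine (abs_add_le _ _).trans (add_le_add ?_ le_rfl)
      calc |∫ y, ((fx (xk k)) y - (fx x) y) ∂(W (xk k))|
          ≤ ∫ y, |(fx (xk k)) y - (fx x) y| ∂(W (xk k)) := by
            simpa [Real.norm_eq_abs] using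
              norm_integral_le_integral_norm (μ := W (xk k))
                (fun y => (fx (xk k)) y - (fx x) y)
        _ ≤ ∫ _, L * dist (xk k) x ∂(W (xk k)) := by
            refine integral_mono (((fx (xk k)).integrable _).sub ((fx x).integrable _)).abs
              (integrable_const _) ?_
            intro y
            exact hfL (xk k) x y
        _ = L * dist (xk k) x := by simp
    have hlim0 : Tendsto (fun k => L * dist (xk k) x +
        |(∫ y, (fx x) y ∂(W (xk k))) - ∫ y, (fx x) y ∂(W x)|) atTop (𝓝 0) := by
      have d0 : Tendsto (fun k => dist (xk k) x) atTop (𝓝 0) :=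
        tendsto_iff_dist_tendsto_zero.mp hxk
      have t1 : Tendsto (fun k => L * dist (xk k) x) atTop (𝓝 0) := by
        simpa using d0.const_mul L
      have t2 : Tendsto (fun k =>
          |(∫ y, (fx x) y ∂(W (xk k))) - ∫ y, (fx x) y ∂(W x)|) atTop (𝓝 0) := by
        have := (h2.sub (tendsto_const_nhds (x := ∫ y, (fx x) y ∂(W x)))).abs
        simpa using this
      simpa using t1.add t2
    rw [tendsto_iff_dist_tendsto_zero]
    refine squeeze_zero (fun k => dist_nonneg) (fun k => ?_) hlim0
    rw [Real.dist_eq]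
    exact bound k
  set G : BoundedContinuousFunction EX ℝ :=
    BoundedContinuousFunction.ofNormedAddCommGroup g hgc ‖f‖ hgb with hGdef
  have hint : ∀ (μ : Measure EX) [IsProbabilityMeasure μ],
      ∫ z, f z ∂(μ ⊗ₘ W) = ∫ x, G x ∂μ := by
    intro μ _
    rw [Measure.integral_compProd (f.integrable _)]
    rfl
  have := hP G
  rw [← hint PX] at this
  refine this.congr fun k => ?_
  rw [← hint (Pk k)]

private lemma csiszar_abs_min_one (a b : ℝ) : |min a 1 - min b 1| ≤ |a - b| := by
  have := abs_min_sub_min_le_max a 1 b 1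
  simpa using this

end Aux

/-- Csiszár's Lemma 2: if `W` is a weak*-continuous Markov kernel from `E_X` to `E_Y`
(i.e. `W(·|x_k) ⇀ W(·|x)` whenever `x_k → x`), then weak convergence `P_k ⇀ P_X` of
probability measures on `E_X` implies weak convergence `P_k ⊗ W ⇀ P_X ⊗ W` of the joint
measures on `E_X × E_Y`. -/
theorem compProd_weakTendsto_of_weakTendsto
    {EX EY : Type*}
    [MetricSpace EX] [TopologicalSpace.SeparableSpace EX] [CompleteSpace EX]
    [MeasurableSpace EX] [BorelSpace EX]
    [MetricSpace EY] [TopologicalSpace.SeparableSpace EY] [CompleteSpace EY]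
    [MeasurableSpace EY] [BorelSpace EY]
    (W : Kernel EX EY) [IsMarkovKernel W]
    (hW : ∀ (x : EX) (xk : ℕ → EX), Tendsto xk atTop (𝓝 x) →
      WeakTendsto (fun k => W (xk k)) (W x))
    (PX : Measure EX) [IsProbabilityMeasure PX]
    (Pk : ℕ → Measure EX) [∀ k, IsProbabilityMeasure (Pk k)]
    (hP : WeakTendsto Pk PX) :
    WeakTendsto (fun k => (Pk k) ⊗ₘ W) (PX ⊗ₘ W) := by
  classical
  haveI : SecondCountableTopology EX := UniformSpace.secondCountable_of_separable EX
  haveI : SecondCountableTopology EY := UniformSpace.secondCountable_of_separable EY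
  set P' : ProbabilityMeasure (EX × EY) := ⟨PX ⊗ₘ W, inferInstance⟩ with hP'def
  set Pk' : ℕ → ProbabilityMeasure (EX × EY) := fun k => ⟨(Pk k) ⊗ₘ W, inferInstance⟩ with hPk'def
  have main : Tendsto Pk' atTop (𝓝 P') := by
    apply MeasureTheory.tendsto_of_forall_isOpen_le_liminf
    intro U hU
    by_cases hUu : U = Set.univ
    · subst hUu
      simp only [ProbabilityMeasure.coeFn_univ]
      show (1:ℝ≥0) ≤ liminf (fun i => Pk' i Set.univ) atTop
      simp only [ProbabilityMeasure.coeFn_univ, liminf_const, le_refl]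
    -- complement is nonempty and closed
    have hFne : Uᶜ.Nonempty := Set.nonempty_compl.mpr hUu
    -- approximating functions
    set gm : ℕ → EX × EY → ℝ :=
      fun m z => min ((m + 1 : ℝ) * Metric.infDist z Uᶜ) 1 with hgmdef
    have gm_cont : ∀ m, Continuous (gm m) :=
      fun m => (continuous_const.mul (Metric.continuous_infDist_pt Uᶜ)).min continuous_const
    have gm_nonneg : ∀ m z, 0 ≤ gm m z := by
      intro m z
      apply le_min _ zero_le_one
      exact mul_nonneg (by positivity) Metric.infDist_nonneg
    have gm_le_one : ∀ m z, gm m z ≤ 1 := fun m z => min_le_right _ _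
    have gm_norm : ∀ m z, ‖gm m z‖ ≤ 1 := by
      intro m z
      rw [Real.norm_eq_abs, abs_of_nonneg (gm_nonneg m z)]
      exact gm_le_one m z
    set Gm : ℕ → BoundedContinuousFunction (EX × EY) ℝ :=
      fun m => BoundedContinuousFunction.ofNormedAddCommGroup (gm m) (gm_cont m) 1 (gm_norm m)
      with hGmdef
    have Gm_apply : ∀ m z, Gm m z = gm m z := fun m z => rfl
    have Gm_lip : ∀ m x x' y, |Gm m (x, y) - Gm m (x', y)| ≤ ((m : ℝ) + 1) * dist x x' := by
      intro m x x' y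
      rw [Gm_apply, Gm_apply, hgmdef]
      refine (csiszar_abs_min_one _ _).trans ?_
      rw [← mul_sub, abs_mul, abs_of_nonneg (by positivity : (0:ℝ) ≤ (m:ℝ) + 1)]
      refine mul_le_mul_of_nonneg_left ?_ (by positivity)
      have h1 := Metric.infDist_le_infDist_add_dist (x := (x, y)) (y := (x', y)) (s := Uᶜ)
      have h2 := Metric.infDist_le_infDist_add_dist (x := (x', y)) (y := (x, y)) (s := Uᶜ)
      have hd : dist ((x : EX), y) (x', y) = dist x x' := by
        rw [Prod.dist_eq]
        simp [dist_self]
      have hd' : dist ((x' : EX), y) (x, y) = dist x' x := by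
        rw [Prod.dist_eq]
        simp [dist_self]
      rw [hd] at h1
      rw [hd', dist_comm] at h2
      rw [abs_sub_le_iff]
      constructor <;> linarith
    -- the key convergence for each m
    have key : ∀ m, Tendsto (fun k => ∫ z, Gm m z ∂((Pk k) ⊗ₘ W)) atTop
        (𝓝 (∫ z, Gm m z ∂(PX ⊗ₘ W))) := by
      intro m
      exact csiszar_key_tendsto W hW PX Pk hP (Gm m) ((m : ℝ) + 1) (Gm_lip m)
    -- gm m ≤ indicator U
    have gm_le_ind : ∀ m z, gm m z ≤ Set.indicator U (fun _ => (1:ℝ)) z := by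
      intro m z
      by_cases hz : z ∈ U
      · rw [Set.indicator_of_mem hz]
        exact gm_le_one m z
      · rw [Set.indicator_of_notMem hz]
        have : Metric.infDist z Uᶜ = 0 := Metric.infDist_zero_of_mem (by simpa using hz)
        simp [hgmdef, this]
    -- pointwise convergence of gm to indicator U
    have gm_tendsto : ∀ z, Tendsto (fun m => gm m z) atTop
        (𝓝 (Set.indicator U (fun _ => (1:ℝ)) z)) := by
      intro z
      by_cases hz : z ∈ U
      · rw [Set.indicator_of_mem hz]
        have hdpos : 0 < Metric.infDist z Uᶜ :=
          (hU.isClosed_compl.notMem_iff_infDist_pos hFne).mp (by simpa using hz)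
        have hev : ∀ᶠ m in atTop, gm m z = 1 := by
          obtain ⟨N, hN⟩ := exists_nat_ge (1 / Metric.infDist z Uᶜ)
          filter_upwards [eventually_ge_atTop N] with m hm
          have h1 : (1:ℝ) ≤ ((m:ℝ) + 1) * Metric.infDist z Uᶜ := by
            have : (1:ℝ) / Metric.infDist z Uᶜ ≤ (m:ℝ) + 1 := by
              have : (N:ℝ) ≤ (m:ℝ) := by exact_mod_cast hm
              linarith
            calc (1:ℝ) = (1 / Metric.infDist z Uᶜ) * Metric.infDist z Uᶜ := by
                  field_simp
              _ ≤ ((m:ℝ) + 1) * Metric.infDist z Uᶜ :=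
                  mul_le_mul_of_nonneg_right this hdpos.le
          simp [hgmdef, min_eq_right h1]
        refine Tendsto.congr' ?_ tendsto_const_nhds
        filter_upwards [hev] with m hm
        exact hm.symm
      · rw [Set.indicator_of_notMem hz]
        have hz0 : Metric.infDist z Uᶜ = 0 := Metric.infDist_zero_of_mem (by simpa using hz)
        have : ∀ m, gm m z = 0 := by
          intro m
          simp [hgmdef, hz0]
        simpa [this] using tendsto_const_nhds (x := (0:ℝ)) (f := atTop (α := ℕ))
    -- real-valued liminf chain
    have hUm : MeasurableSet U := hU.measurableSet
    have step_a : ∀ m, ∫ z, Gm m z ∂(PX ⊗ₘ W) ≤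
        liminf (fun k => (((Pk k) ⊗ₘ W) U).toReal) atTop := by
      intro m
      have h1 : ∀ k, ∫ z, Gm m z ∂((Pk k) ⊗ₘ W) ≤ (((Pk k) ⊗ₘ W) U).toReal := by
        intro k
        rw [← measureReal_def, ← integral_indicator_one (μ := (Pk k) ⊗ₘ W) hUm]
        refine integral_mono ((Gm m).integrable _)
          ((integrable_const (1:ℝ)).indicator hUm) ?_
        intro z
        exact gm_le_ind m z
      have hb1 : IsBoundedUnder (· ≤ ·) atTop (fun k => (((Pk k) ⊗ₘ W) U).toReal) := by
        refine isBoundedUnder_of ⟨1, fun k => ?_⟩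
        simpa using ENNReal.toReal_mono ENNReal.one_ne_top (prob_le_one (μ := (Pk k) ⊗ₘ W))
      have hlo : IsBoundedUnder (· ≥ ·) atTop (fun k => ∫ z, Gm m z ∂((Pk k) ⊗ₘ W)) := by
        refine isBoundedUnder_of ⟨0, fun k => ?_⟩
        exact integral_nonneg fun z => gm_nonneg m z
      calc ∫ z, Gm m z ∂(PX ⊗ₘ W)
          = liminf (fun k => ∫ z, Gm m z ∂((Pk k) ⊗ₘ W)) atTop := ((key m).liminf_eq).symm
        _ ≤ liminf (fun k => (((Pk k) ⊗ₘ W) U).toReal) atTop :=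
            liminf_le_liminf (Eventually.of_forall h1) hlo hb1.isCoboundedUnder_ge
    have step_b : Tendsto (fun m => ∫ z, Gm m z ∂(PX ⊗ₘ W)) atTop
        (𝓝 (((PX ⊗ₘ W) U).toReal)) := by
      rw [← measureReal_def, ← integral_indicator_one (μ := PX ⊗ₘ W) hUm]
      refine tendsto_integral_of_dominated_convergence (fun _ => (1:ℝ))
        (fun m => ((Gm m).continuous.stronglyMeasurable).aestronglyMeasurable)
        (integrable_const _) (fun m => Eventually.of_forall fun z => gm_norm m z)
        (Eventually.of_forall fun z => ?_)
      exact gm_tendsto z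
    have hreal : (((PX ⊗ₘ W) U).toReal) ≤
        liminf (fun k => (((Pk k) ⊗ₘ W) U).toReal) atTop :=
      le_of_tendsto step_b (Eventually.of_forall step_a)
    -- convert to ℝ≥0
    have hmap : ((liminf (fun k => Pk' k U) atTop : ℝ≥0) : ℝ) =
        liminf (fun k => ((Pk' k U : ℝ≥0) : ℝ)) atTop := by
      refine Monotone.map_liminf_of_continuousAt (F := atTop) NNReal.coe_mono
        (fun k => Pk' k U) NNReal.continuous_coe.continuousAt ?_ ?_
      · exact IsBoundedUnder.isCoboundedUnder_ge
          (isBoundedUnder_of ⟨1, fun k => ProbabilityMeasure.apply_le_one _ _⟩)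
      · exact isBoundedUnder_of ⟨0, fun k => zero_le⟩
    rw [← NNReal.coe_le_coe, hmap]
    have e1 : ((P' U : ℝ≥0) : ℝ) = ((PX ⊗ₘ W) U).toReal := rfl
    have e2 : (fun k => ((Pk' k U : ℝ≥0) : ℝ)) = fun k => (((Pk k) ⊗ₘ W) U).toReal := rfl
    rw [e1, e2]
    exact hreal
  intro f
  have := ProbabilityMeasure.tendsto_iff_forall_integral_tendsto.mp main f
  exact this
end

section
/- Let X_1, X_2, … be i.i.d. random variables with values in a Polish space E and common law P. Then almost surely the sequence of empirical measures P_n = (1/n) Σ_{ℓ=1}^n δ_{X_ℓ} converges weakly to P (Varadarajan's theorem). -/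
open MeasureTheory ProbabilityTheory Filter Topology
open scoped ENNReal

/-- The empirical measure of the first `n` letters of a sequence. -/
noncomputable def empMeasure {E : Type*} [MeasurableSpace E] (x : ℕ → E) (n : ℕ) :
    Measure E :=
  (n : ℝ≥0∞)⁻¹ • ∑ i ∈ Finset.range n, Measure.dirac (x i)

section Aux

open scoped Classical

lemma empMeasure_apply_aux {E : Type*} [MeasurableSpace E] (x : ℕ → E) (n : ℕ)
    {A : Set E} (hA : MeasurableSet A) :
    empMeasure x n A = (n : ℝ≥0∞)⁻¹ * ∑ i ∈ Finset.range n, A.indicator 1 (x i) := by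
  simp [empMeasure, Measure.smul_apply, Measure.finset_sum_apply, Measure.dirac_apply' _ hA,
    smul_eq_mul]

lemma isProbabilityMeasure_empMeasure_aux {E : Type*} [MeasurableSpace E] (x : ℕ → E) (n : ℕ)
    (hn : n ≠ 0) : IsProbabilityMeasure (empMeasure x n) := by
  constructor
  rw [empMeasure_apply_aux x n MeasurableSet.univ]
  simp only [Set.indicator_univ, Pi.one_apply, Finset.sum_const, Finset.card_range, nsmul_eq_mul,
    mul_one]
  exact ENNReal.inv_mul_cancel (by exact_mod_cast hn) (by simp)

/-- If the liminf condition on open sets holds, then integrals of bounded continuous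
functions converge. -/
lemma weakTendsto_of_opens_aux {E : Type*} [TopologicalSpace E] [MeasurableSpace E]
    [OpensMeasurableSpace E]
    {μs : ℕ → Measure E} {P : Measure E} [IsProbabilityMeasure P]
    [∀ n, IsProbabilityMeasure (μs n)]
    (h : ∀ G, IsOpen G → P G ≤ atTop.liminf fun n ↦ μs n G)
    (f : BoundedContinuousFunction E ℝ) :
    Tendsto (fun n => ∫ x, f x ∂(μs n)) atTop (𝓝 (∫ x, f x ∂P)) :=
  BoundedContinuousFunction.tendsto_integral_of_forall_integral_le_liminf_integral
    (fun _ hg ↦ integral_le_liminf_integral_of_forall_isOpen_measure_le_liminf_measure hg h) f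

/-- Reduction of the liminf condition on all open sets to convergence on finite unions of a
countable basis. -/
lemma liminf_opens_of_basis_aux {E : Type*} [TopologicalSpace E] [MeasurableSpace E]
    {μs : ℕ → Measure E} {P : Measure E}
    (e : ℕ → Set E)
    (hbasis : ∀ G : Set E, IsOpen G → ∀ x ∈ G, ∃ j, x ∈ e j ∧ e j ⊆ G)
    (htend : ∀ F : Finset ℕ,
      Tendsto (fun n ↦ μs n (⋃ j ∈ F, e j)) atTop (𝓝 (P (⋃ j ∈ F, e j))))
    {G : Set E} (hG : IsOpen G) :
    P G ≤ atTop.liminf fun n ↦ μs n G := by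
  set V : ℕ → Set E := fun n ↦ ⋃ j ∈ (Finset.range n).filter (fun j ↦ e j ⊆ G), e j with hV
  have Vsub : ∀ n, V n ⊆ G := by
    intro n x hx
    simp only [hV, Set.mem_iUnion, Finset.mem_filter] at hx
    obtain ⟨j, ⟨-, hj⟩, hxj⟩ := hx
    exact hj hxj
  have Vmono : Monotone V := by
    intro a b hab
    exact Set.biUnion_subset_biUnion_left
      (Finset.coe_subset.mpr (Finset.filter_subset_filter _ (Finset.range_subset_range.mpr hab)))
  have VUnion : (⋃ n, V n) = G := by
    apply Set.Subset.antisymm (Set.iUnion_subset Vsub)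
    intro x hx
    obtain ⟨j, hxj, hjG⟩ := hbasis G hG x hx
    refine Set.mem_iUnion.mpr ⟨j + 1, ?_⟩
    simp only [hV, Set.mem_iUnion, Finset.mem_filter, Finset.mem_range]
    exact ⟨j, ⟨Nat.lt_succ_self j, hjG⟩, hxj⟩
  have key : ∀ n, P (V n) ≤ atTop.liminf fun m ↦ μs m G := by
    intro n
    have h1 : P (V n) = atTop.liminf fun m ↦ μs m (V n) :=
      ((htend ((Finset.range n).filter (fun j ↦ e j ⊆ G))).liminf_eq).symm
    rw [h1]
    exact liminf_le_liminf (Eventually.of_forall fun m ↦ measure_mono (Vsub n))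
  have := tendsto_measure_iUnion_atTop (μ := P) Vmono
  rw [VUnion] at this
  exact le_of_tendsto' this key

/-- Strong law of large numbers applied to the indicator of a fixed measurable set: the
empirical measures of the set converge almost surely. -/
lemma emp_tendsto_of_set_aux
    {E : Type*} [MeasurableSpace E]
    {Ω : Type*} [MeasurableSpace Ω] (μ : Measure Ω) [IsProbabilityMeasure μ]
    (P : Measure E) [IsProbabilityMeasure P]
    (X : ℕ → Ω → E) (hmeas : ∀ i, Measurable (X i))
    (hindep : iIndepFun X μ)
    (hlaw : ∀ i, μ.map (X i) = P) {A : Set E} (hA : MeasurableSet A) :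
    ∀ᵐ ω ∂μ, Tendsto (fun n ↦ empMeasure (fun i => X i ω) n A) atTop (𝓝 (P A)) := by
  set g : E → ℝ := A.indicator 1 with hg_def
  have hg : Measurable g := measurable_const.indicator hA
  set Y : ℕ → Ω → ℝ := fun i ω ↦ g (X i ω) with hY_def
  have hYmeas : ∀ i, Measurable (Y i) := fun i ↦ hg.comp (hmeas i)
  have hbd : ∀ i ω, ‖Y i ω‖ ≤ 1 := by
    intro i ω
    simp only [hY_def, hg_def]
    rw [Set.indicator_apply]
    split_ifs <;> simp
  have hint : Integrable (Y 0) μ :=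
    Integrable.mono' (integrable_const (1 : ℝ)) (hYmeas 0).aestronglyMeasurable
      (Eventually.of_forall fun ω ↦ hbd 0 ω)
  have hXid : ∀ i, IdentDistrib (X i) (X 0) μ μ := fun i ↦
    ⟨(hmeas i).aemeasurable, (hmeas 0).aemeasurable, by rw [hlaw i, hlaw 0]⟩
  have hid : ∀ i, IdentDistrib (Y i) (Y 0) μ μ := fun i ↦ (hXid i).comp hg
  have hpind : Pairwise (Function.onFun (IndepFun · · μ) Y) := fun i j hij ↦
    (hindep.indepFun hij).comp hg hg
  have hmean : μ[Y 0] = (P A).toReal := by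
    have h1 : μ[Y 0] = ∫ y, g y ∂(μ.map (X 0)) :=
      (integral_map (hmeas 0).aemeasurable hg.aestronglyMeasurable).symm
    rw [h1, hlaw 0, hg_def, integral_indicator_one hA, measureReal_def]
  filter_upwards [strong_law_ae_real Y hint hpind hid] with ω hω
  have h2 : Tendsto (fun n ↦ ENNReal.ofReal ((∑ i ∈ Finset.range n, Y i ω) / n)) atTop
      (𝓝 (ENNReal.ofReal (μ[Y 0]))) := (ENNReal.continuous_ofReal.tendsto _).comp hω
  rw [hmean, ENNReal.ofReal_toReal (measure_ne_top P A)] at h2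
  have heq : ∀ n : ℕ, empMeasure (fun i => X i ω) n A
      = ENNReal.ofReal ((∑ i ∈ Finset.range n, Y i ω) / n) := by
    intro n
    rw [empMeasure_apply_aux _ _ hA]
    rcases n with _ | n
    · simp
    · have hpos : (0 : ℝ) < ((n + 1 : ℕ) : ℝ) := by positivity
      have hnn : ∀ i, (0 : ℝ) ≤ Y i ω := fun i ↦ Set.indicator_nonneg (fun _ _ ↦ zero_le_one) _
      rw [ENNReal.ofReal_div_of_pos hpos, ENNReal.ofReal_sum_of_nonneg (fun i _ ↦ hnn i),
        ENNReal.ofReal_natCast, ENNReal.div_eq_inv_mul]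
      congr 1
      refine Finset.sum_congr rfl fun i _ ↦ ?_
      simp only [hY_def, hg_def]
      rw [Set.indicator_apply, Set.indicator_apply]
      split_ifs <;> simp
  simpa only [heq] using h2

end Aux

/-- Varadarajan's theorem: the empirical measures of an i.i.d. sequence with law `P` on a
Polish space almost surely converge weakly to `P`. -/
theorem varadarajan
    {E : Type*} [MetricSpace E] [TopologicalSpace.SeparableSpace E] [CompleteSpace E]
    [MeasurableSpace E] [BorelSpace E]
    {Ω : Type*} [MeasurableSpace Ω] (μ : Measure Ω) [IsProbabilityMeasure μ]
    (P : Measure E) [IsProbabilityMeasure P]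
    (X : ℕ → Ω → E) (hmeas : ∀ i, Measurable (X i))
    (hindep : iIndepFun X μ)
    (hlaw : ∀ i, μ.map (X i) = P) :
    ∀ᵐ ω ∂μ, WeakTendsto (fun n => empMeasure (fun i => X i ω) n) P := by
  -- `E` is nonempty since it carries a probability measure
  rcases isEmpty_or_nonempty E with hE | hE
  · exfalso
    have h1 : P Set.univ = 1 := measure_univ
    rw [Set.eq_empty_of_isEmpty (Set.univ : Set E), measure_empty] at h1
    exact zero_ne_one h1
  -- choose a countable basis of open balls
  obtain ⟨d, hd⟩ := TopologicalSpace.exists_dense_seq E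
  set e : ℕ → Set E := fun j ↦ Metric.ball (d j.unpair.1) (1 / (j.unpair.2 + 1)) with he
  have hopen : ∀ j, IsOpen (e j) := fun j ↦ Metric.isOpen_ball
  have hbasis : ∀ G : Set E, IsOpen G → ∀ x ∈ G, ∃ j, x ∈ e j ∧ e j ⊆ G := by
    intro G hGopen x hx
    rcases Metric.isOpen_iff.mp hGopen x hx with ⟨ε, εpos, hball⟩
    obtain ⟨m, hm⟩ := exists_nat_one_div_lt (half_pos εpos)
    have hrpos : (0 : ℝ) < 1 / (m + 1) := by positivity
    obtain ⟨k, hk⟩ := hd.exists_dist_lt x hrpos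
    refine ⟨Nat.pair k m, ?_, ?_⟩
    · simp only [he, Nat.unpair_pair, Metric.mem_ball]
      exact hk
    · intro y hy
      apply hball
      simp only [he, Nat.unpair_pair, Metric.mem_ball] at hy
      rw [Metric.mem_ball]
      have h3 : dist y x ≤ dist y (d k) + dist (d k) x := dist_triangle y (d k) x
      rw [dist_comm (d k) x] at h3
      calc dist y x ≤ dist y (d k) + dist x (d k) := h3
        _ < 1 / (m + 1) + 1 / (m + 1) := by linarith
        _ < ε := by linarith
  -- almost surely, the empirical measure of each finite union of basis sets converges
  have hae : ∀ᵐ ω ∂μ, ∀ F : Finset ℕ,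
      Tendsto (fun n ↦ empMeasure (fun i => X i ω) n (⋃ j ∈ F, e j)) atTop
        (𝓝 (P (⋃ j ∈ F, e j))) := by
    rw [ae_all_iff]
    intro F
    exact emp_tendsto_of_set_aux μ P X hmeas hindep hlaw
      (Set.Finite.measurableSet_biUnion F.finite_toSet fun j _ ↦ (hopen j).measurableSet)
  filter_upwards [hae] with ω hω
  intro f
  haveI : ∀ n : ℕ, IsProbabilityMeasure (empMeasure (fun i => X i ω) (n + 1)) := fun n ↦
    isProbabilityMeasure_empMeasure_aux _ _ n.succ_ne_zero
  have hshift : Tendsto (fun n ↦ ∫ x, f x ∂(empMeasure (fun i => X i ω) (n + 1))) atTop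
      (𝓝 (∫ x, f x ∂P)) := by
    apply weakTendsto_of_opens_aux (μs := fun n ↦ empMeasure (fun i => X i ω) (n + 1))
    intro G hG
    exact liminf_opens_of_basis_aux e hbasis
      (fun F ↦ (hω F).comp (tendsto_add_atTop_nat 1)) hG
  exact (tendsto_add_atTop_iff_nat 1).mp hshift
end

section
/- Let P and M be probability measures on a measurable space (E, ℰ), and let ℱ be a field of sets generating ℰ. Then the Kullback–Leibler divergence satisfies D(P‖M) = sup over finite partitions 𝒬 ⊆ ℱ of Σ_i P(Q_i) log(P(Q_i)/M(Q_i)); i.e., partitions drawn from the generating field suffice to achieve the supremum over all finite measurable partitions. -/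
open MeasureTheory Set

/-- The relative entropy of `P` with respect to `M` computed on a finite partition `Q`,
with the conventions `0 · log (0/q) = 0` and `p · log (p/0) = ∞` for `p > 0`. -/
noncomputable def partRelEntropy {E : Type*} [MeasurableSpace E] (P M : Measure E)
    (Q : Finset (Set E)) : EReal :=
  ∑ A ∈ Q,
    if P A = 0 then (0 : EReal)
    else if M A = 0 then (⊤ : EReal)
    else (((P A).toReal * Real.log ((P A).toReal / (M A).toReal) : ℝ) : EReal)

/-- A finite partition of the space into (not necessarily measurable) pieces. -/
def IsPartition {E : Type*} (Q : Finset (Set E)) : Prop :=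
  ((Q : Set (Set E)).PairwiseDisjoint id) ∧ ⋃₀ (Q : Set (Set E)) = Set.univ

section Aux

open Filter Topology
open scoped ENNReal symmDiff

/-- The single-set term appearing in `partRelEntropy`. -/
noncomputable def klT {E : Type*} [MeasurableSpace E] (P M : Measure E) (A : Set E) : EReal :=
  if P A = 0 then (0 : EReal)
  else if M A = 0 then (⊤ : EReal)
  else ((P A).toReal * Real.log ((P A).toReal / (M A).toReal) : ℝ)

lemma partRelEntropy_eq_sum_klT {E : Type*} [MeasurableSpace E] (P M : Measure E)
    (Q : Finset (Set E)) : partRelEntropy P M Q = ∑ A ∈ Q, klT P M A := rfl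

/-- The auxiliary real-valued function `x log x - x log y`. -/
noncomputable def phiR (x y : ℝ) : ℝ := x * Real.log x - x * Real.log y

lemma phiR_le_klT {E : Type*} [MeasurableSpace E] (P M : Measure E)
    [IsFiniteMeasure P] [IsFiniteMeasure M] (A : Set E) {η : ℝ} (hη : 0 < η) :
    ((phiR (P A).toReal ((M A).toReal + η) : ℝ) : EReal) ≤ klT P M A := by
  unfold klT phiR
  split_ifs with h1 h2
  · simp [h1]
  · exact le_top
  · rw [EReal.coe_le_coe_iff]
    have hp0 : 0 < (P A).toReal := ENNReal.toReal_pos h1 (measure_ne_top _ _)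
    have hq0 : 0 < (M A).toReal := ENNReal.toReal_pos h2 (measure_ne_top _ _)
    rw [Real.log_div (ne_of_gt hp0) (ne_of_gt hq0), mul_sub]
    have : (P A).toReal * Real.log (M A).toReal
        ≤ (P A).toReal * Real.log ((M A).toReal + η) :=
      mul_le_mul_of_nonneg_left (Real.log_le_log hq0 (by linarith)) hp0.le
    linarith

lemma klT_eq_phiR {E : Type*} [MeasurableSpace E] (P M : Measure E)
    [IsFiniteMeasure P] [IsFiniteMeasure M] (A : Set E) (h : P A ≠ 0 → M A ≠ 0) :
    klT P M A = ((phiR (P A).toReal (M A).toReal : ℝ) : EReal) := by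
  unfold klT phiR
  split_ifs with h1 h2
  · simp [h1]
  · exact absurd h2 (h h1)
  · have hp0 : 0 < (P A).toReal := ENNReal.toReal_pos h1 (measure_ne_top _ _)
    have hq0 : 0 < (M A).toReal := ENNReal.toReal_pos h2 (measure_ne_top _ _)
    rw [Real.log_div (ne_of_gt hp0) (ne_of_gt hq0), mul_sub]

lemma phiR_ge_neg_two {x y : ℝ} (hx0 : 0 ≤ x) (hx1 : x ≤ 1) (hy0 : 0 < y) (hy : y ≤ 2) :
    -2 ≤ phiR x y := by
  unfold phiR
  rcases eq_or_lt_of_le hx0 with h | h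
  · simp [← h]
  · have h1 : Real.log (1/x) ≤ 1/x - 1 := Real.log_le_sub_one_of_pos (by positivity)
    rw [Real.log_div one_ne_zero (ne_of_gt h), Real.log_one] at h1
    have hxx : x - 1 ≤ x * Real.log x := by
      have := mul_le_mul_of_nonneg_left h1 hx0
      have hx' : x * (1/x) = 1 := by field_simp
      nlinarith
    have h2 : Real.log y ≤ y - 1 := Real.log_le_sub_one_of_pos hy0
    have h3 : x * Real.log y ≤ x * 1 := mul_le_mul_of_nonneg_left (by linarith) hx0
    nlinarith

lemma tendsto_phiR {ι : Type*} {l : Filter ι} {x y : ι → ℝ} {a b : ℝ}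
    (hx : Tendsto x l (𝓝 a)) (hy : Tendsto y l (𝓝 b)) (hb : b ≠ 0) :
    Tendsto (fun n => phiR (x n) (y n)) l (𝓝 (phiR a b)) := by
  unfold phiR
  exact ((Real.continuous_mul_log.tendsto a).comp hx).sub
    (hx.mul ((Real.continuousAt_log hb).tendsto.comp hy))

lemma ereal_coe_sum {ι : Type*} (s : Finset ι) (f : ι → ℝ) :
    ((∑ i ∈ s, f i : ℝ) : EReal) = ∑ i ∈ s, (f i : EReal) := by
  induction s using Finset.cons_induction with
  | empty => simp
  | cons a s ha ih => rw [Finset.sum_cons, Finset.sum_cons, EReal.coe_add, ih]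

lemma sum_image_pairwiseDisjoint {E : Type*} [DecidableEq (Set E)] {k : ℕ} (C : Fin k → Set E)
    (hdisj : ∀ i j, i ≠ j → Disjoint (C i) (C j)) (g : Set E → EReal) (hg : g ∅ = 0) :
    ∑ A ∈ Finset.image C Finset.univ, g A = ∑ i, g (C i) := by
  classical
  set s : Finset (Fin k) := Finset.univ.filter (fun i => C i ≠ ∅) with hs
  have hinj : ∀ i ∈ s, ∀ j ∈ s, C i = C j → i = j := by
    intro i hi j hj hC
    by_contra hne
    have hd := hdisj i j hne
    rw [hC, disjoint_self, bot_eq_empty] at hd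
    exact (Finset.mem_filter.mp hj).2 hd
  have h1 : ∑ A ∈ Finset.image C s, g A = ∑ i ∈ s, g (C i) := Finset.sum_image hinj
  have h2 : ∑ i ∈ s, g (C i) = ∑ i, g (C i) := by
    apply Finset.sum_subset (Finset.subset_univ s)
    intro i _ hi
    have : C i = ∅ := by simpa [hs] using hi
    rw [this, hg]
  have h3 : ∑ A ∈ Finset.image C Finset.univ, g A = ∑ A ∈ Finset.image C s, g A := by
    symm
    apply Finset.sum_subset (Finset.image_subset_image (Finset.subset_univ s))
    intro A hA hA'
    obtain ⟨i, -, rfl⟩ := Finset.mem_image.mp hA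
    have : C i = ∅ := by
      by_contra h
      exact hA' (Finset.mem_image.mpr ⟨i, by simp [hs, h], rfl⟩)
    rw [this, hg]
  rw [h3, h1, h2]

lemma abs_toReal_sub_le {a b d : ℝ≥0∞} (ha : a ≠ ⊤) (hb : b ≠ ⊤) (hd : d ≠ ⊤)
    (h1 : a ≤ b + d) (h2 : b ≤ a + d) : |a.toReal - b.toReal| ≤ d.toReal := by
  rw [abs_le]
  constructor
  · have := ENNReal.toReal_mono (by finiteness) h2
    rw [ENNReal.toReal_add ha hd] at this
    linarith
  · have := ENNReal.toReal_mono (by finiteness) h1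
    rw [ENNReal.toReal_add hb hd] at this
    linarith

lemma subset_union_symmDiff {E : Type*} (S T : Set E) : S ⊆ T ∪ (S ∆ T) := by
  intro x hx
  by_cases h : x ∈ T
  · exact Or.inl h
  · exact Or.inr (Or.inl ⟨hx, h⟩)

lemma sum_reindex {E : Type*} (Q : Finset (Set E)) (g : Set E → EReal) :
    ∑ B ∈ Q, g B = ∑ i : Fin Q.card, g ((Q.equivFin.symm i : Set E)) := by
  rw [← Finset.sum_coe_sort Q g]
  exact (Equiv.sum_comp Q.equivFin.symm (fun x : Q => g (x : Set E))).symm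

end Aux

open Filter Topology
open scoped ENNReal symmDiff

/-- Gray's Lemma 5.2.2: the KL divergence, defined as the supremum of partition relative
entropies over all finite measurable partitions, is already attained as the supremum over
finite partitions drawn from any field `ℱ` generating the σ-algebra. -/
theorem divergence_eq_sup_over_generating_field
    {E : Type*} [MeasurableSpace E]
    (P M : Measure E) [IsProbabilityMeasure P] [IsProbabilityMeasure M]
    (F : Set (Set E))
    (huniv : univ ∈ F)
    (hcompl : ∀ A ∈ F, Aᶜ ∈ F)
    (hunion : ∀ A ∈ F, ∀ B ∈ F, A ∪ B ∈ F)
    (hgen : MeasurableSpace.generateFrom F = (inferInstance : MeasurableSpace E)) :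
    (⨆ (Q : Finset (Set E)) (_ : IsPartition Q ∧ ∀ A ∈ Q, MeasurableSet A),
        partRelEntropy P M Q) =
    (⨆ (Q : Finset (Set E)) (_ : IsPartition Q ∧ ↑Q ⊆ F),
        partRelEntropy P M Q) := by
  classical
  have hFmeas : ∀ A ∈ F, MeasurableSet A := by
    intro A hA
    have h := MeasurableSpace.measurableSet_generateFrom (s := F) hA
    rwa [hgen] at h
  refine le_antisymm (iSup_le fun Q => iSup_le fun hQ => ?_)
    (iSup_le fun Q => iSup_le fun hQ => le_iSup₂_of_le Q
      ⟨hQ.1, fun A hA => hFmeas A (hQ.2 hA)⟩ le_rfl)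
  obtain ⟨⟨hdisj, hcover⟩, hmeas⟩ := hQ
  set SF := ⨆ (Q : Finset (Set E)) (_ : IsPartition Q ∧ ↑Q ⊆ F), partRelEntropy P M Q with hSF
  -- enumerate the partition
  set m := Q.card with hm
  set A : Fin m → Set E := fun i => ((Q.equivFin.symm i : Q) : Set E) with hA
  have hAmem : ∀ i, A i ∈ Q := fun i => (Q.equivFin.symm i).2
  have hAinj : Function.Injective A := fun i j h =>
    Q.equivFin.symm.injective (Subtype.coe_injective h)
  have hAdisj : ∀ i j, i ≠ j → Disjoint (A i) (A j) := fun i j hij =>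
    hdisj (hAmem i) (hAmem j) (fun h => hij (hAinj h))
  have hAmeas : ∀ i, MeasurableSet (A i) := fun i => hmeas _ (hAmem i)
  have hAcover : ∀ x : E, ∃ i, x ∈ A i := by
    intro x
    have : x ∈ ⋃₀ (Q : Set (Set E)) := hcover ▸ mem_univ x
    obtain ⟨B, hB, hxB⟩ := this
    exact ⟨Q.equivFin ⟨B, hB⟩, by simp [hA]; exact hxB⟩
  have hrw : partRelEntropy P M Q = ∑ i : Fin m, klT P M (A i) := by
    rw [partRelEntropy_eq_sum_klT, sum_reindex]
  -- the key approximation step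
  set μ : Measure E := P + M with hμ
  have hPμ : P ≤ μ := Measure.le_add_right le_rfl
  have hMμ : M ≤ μ := Measure.le_add_left le_rfl
  have halg : IsSetAlgebra F :=
    ⟨by simpa using hcompl univ huniv, fun s hs => hcompl s hs, fun s t hs ht => hunion s hs t ht⟩
  have hdense := Measure.MeasureDense.of_generateFrom_isSetAlgebra_finite (μ := μ) halg hgen.symm
  have KEY : ∀ η : ℝ, 0 < η →
      ((∑ i : Fin m, phiR (P (A i)).toReal ((M (A i)).toReal + η) : ℝ) : EReal) ≤ SF := by
    intro η hη
    have hex : ∀ (n : ℕ) (i : Fin m), ∃ B ∈ F,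
        μ ((A i) ∆ B) < ENNReal.ofReal (1/(n+1)) := fun n i =>
      hdense.approx (A i) (hAmeas i) (measure_ne_top μ _) _ (by positivity)
    choose B hBF hBμ using hex
    set C : ℕ → Fin m → Set E := fun n i =>
      B n i \ (⋃ k ∈ Finset.univ.filter (fun k => k < i), B n k) with hC
    set Rst : ℕ → Set E := fun n => (⋃ k ∈ (Finset.univ : Finset (Fin m)), B n k)ᶜ with hRst
    set Cf : ℕ → Fin (m+1) → Set E := fun n => Fin.snoc (C n) (Rst n) with hCf
    set Af : Fin (m+1) → Set E := Fin.snoc A ∅ with hAf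
    set D : ℕ → Set E := fun n => ⋃ i : Fin m, (A i) ∆ (B n i) with hD
    -- symmetric difference control
    have hCB : ∀ n i, C n i ⊆ B n i := fun n i => diff_subset
    have hCD : ∀ n i, (C n i) ∆ (A i) ⊆ D n := by
      intro n i x hx
      rcases hx with ⟨hx1, hx2⟩ | ⟨hx1, hx2⟩
      · exact mem_iUnion.mpr ⟨i, Or.inr ⟨hCB n i hx1, hx2⟩⟩
      · by_cases hB' : x ∈ B n i
        · have : x ∈ ⋃ k ∈ Finset.univ.filter (fun k => k < i), B n k := by
            by_contra h
            exact hx2 ⟨hB', h⟩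
          simp only [Finset.mem_filter, Finset.mem_univ, true_and, mem_iUnion] at this
          obtain ⟨k, hk, hxk⟩ := this
          have hxAk : x ∉ A k := fun h =>
            (hAdisj i k (fun h' => absurd (h' ▸ hk) (lt_irrefl i))).ne_of_mem hx1 h rfl
          exact mem_iUnion.mpr ⟨k, Or.inr ⟨hxk, hxAk⟩⟩
        · exact mem_iUnion.mpr ⟨i, Or.inl ⟨hx1, hB'⟩⟩
    have hRD : ∀ n, Rst n ⊆ D n := by
      intro n x hx
      obtain ⟨i, hi⟩ := hAcover x
      have : x ∉ B n i := by
        intro h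
        exact hx (mem_iUnion₂.mpr ⟨i, Finset.mem_univ i, h⟩)
      exact mem_iUnion.mpr ⟨i, Or.inl ⟨hi, this⟩⟩
    have hCfD : ∀ n j, (Cf n j) ∆ (Af j) ⊆ D n := by
      intro n j
      refine Fin.lastCases ?_ ?_ j
      · simp only [hCf, hAf, Fin.snoc_last]
        rw [symmDiff_def]
        simpa using hRD n
      · intro i
        simpa [hCf, hAf, Fin.snoc_castSucc] using hCD n i
    -- measure of D tends to zero
    have hμD : ∀ n, μ (D n) ≤ m * ENNReal.ofReal (1/(n+1)) := by
      intro n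
      calc μ (D n) ≤ ∑ i : Fin m, μ ((A i) ∆ (B n i)) := measure_iUnion_fintype_le _ _
        _ ≤ ∑ _i : Fin m, ENNReal.ofReal (1/(n+1)) :=
            Finset.sum_le_sum fun i _ => (hBμ n i).le
        _ = m * ENNReal.ofReal (1/(n+1)) := by
            rw [Finset.sum_const, Finset.card_univ, Fintype.card_fin, nsmul_eq_mul]
    have hDto0 : Tendsto (fun n => (μ (D n)).toReal) atTop (𝓝 0) := by
      apply squeeze_zero (fun n => ENNReal.toReal_nonneg)
        (g := fun n : ℕ => (m : ℝ) * (1/(n+1)))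
      · intro n
        have h := ENNReal.toReal_mono (by finiteness) (hμD n)
        rwa [ENNReal.toReal_mul, ENNReal.toReal_natCast,
          ENNReal.toReal_ofReal (by positivity)] at h
      · simpa using (tendsto_one_div_add_atTop_nhds_zero_nat).const_mul (m : ℝ)
    -- convergence of measures of the pieces
    have hnu : ∀ (ν : Measure E), ν ≤ μ → ∀ (n : ℕ) (j : Fin (m+1)),
        |(ν (Cf n j)).toReal - (ν (Af j)).toReal| ≤ (μ (D n)).toReal := by
      intro ν hν n j
      have hfin : ∀ s : Set E, ν s ≠ ⊤ := by
        intro s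
        exact ne_top_of_le_ne_top (measure_ne_top μ s) (hν s)
      refine abs_toReal_sub_le (hfin _) (hfin _) (measure_ne_top μ _) ?_ ?_
      · calc ν (Cf n j) ≤ ν (Af j ∪ ((Cf n j) ∆ (Af j))) := by
              refine measure_mono ?_
              have := subset_union_symmDiff (Cf n j) (Af j)
              exact this
          _ ≤ ν (Af j) + ν ((Cf n j) ∆ (Af j)) := measure_union_le _ _
          _ ≤ ν (Af j) + μ (D n) := by
              gcongr
              exact hCfD n j
      · calc ν (Af j) ≤ ν (Cf n j ∪ ((Af j) ∆ (Cf n j))) :=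
              measure_mono (subset_union_symmDiff _ _)
          _ ≤ ν (Cf n j) + ν ((Af j) ∆ (Cf n j)) := measure_union_le _ _
          _ ≤ ν (Cf n j) + μ (D n) := by
              gcongr
              rw [symmDiff_comm]
              exact hCfD n j
    have hPto : ∀ j, Tendsto (fun n => (P (Cf n j)).toReal) atTop (𝓝 ((P (Af j)).toReal)) := by
      intro j
      rw [tendsto_iff_dist_tendsto_zero]
      exact squeeze_zero (fun n => dist_nonneg)
        (fun n => by rw [Real.dist_eq]; exact hnu P hPμ n j) hDto0
    have hMto : ∀ j, Tendsto (fun n => (M (Cf n j)).toReal) atTop (𝓝 ((M (Af j)).toReal)) := by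
      intro j
      rw [tendsto_iff_dist_tendsto_zero]
      exact squeeze_zero (fun n => dist_nonneg)
        (fun n => by rw [Real.dist_eq]; exact hnu M hMμ n j) hDto0
    -- the image of Cf n is a partition inside F
    have hCfdisj : ∀ n (i j : Fin (m+1)), i ≠ j → Disjoint (Cf n i) (Cf n j) := by
      intro n i j hij
      have key : ∀ (i j : Fin m), i < j → Disjoint (C n i) (C n j) := by
        intro i j hlt
        rw [Set.disjoint_left]
        intro x hxi hxj
        have : x ∈ ⋃ k ∈ Finset.univ.filter (fun k => k < j), B n k :=
          mem_iUnion₂.mpr ⟨i, by simp [hlt], hCB n i hxi⟩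
        exact hxj.2 this
      have hCR : ∀ (i : Fin m), Disjoint (C n i) (Rst n) := by
        intro i
        rw [Set.disjoint_left]
        intro x hxi hxR
        exact hxR (mem_iUnion₂.mpr ⟨i, Finset.mem_univ i, hCB n i hxi⟩)
      revert hij
      induction i using Fin.lastCases with
      | last =>
        induction j using Fin.lastCases with
        | last => intro hij; exact absurd rfl hij
        | cast j' =>
          intro _
          simp only [hCf, Fin.snoc_last, Fin.snoc_castSucc]
          exact (hCR j').symm
      | cast i' =>
        induction j using Fin.lastCases with
        | last =>
          intro _
          simp only [hCf, Fin.snoc_last, Fin.snoc_castSucc]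
          exact hCR i'
        | cast j' =>
          intro hij
          simp only [hCf, Fin.snoc_castSucc]
          have hne : i' ≠ j' := fun h => hij (by rw [h])
          rcases lt_or_gt_of_ne hne with h | h
          · exact key i' j' h
          · exact (key j' i' h).symm
    have hCfF : ∀ n j, Cf n j ∈ F := by
      intro n j
      refine Fin.lastCases ?_ ?_ j
      · simp only [hCf, Fin.snoc_last, hRst]
        exact hcompl _ (halg.biUnion_mem _ fun k _ => hBF n k)
      · intro i
        simp only [hCf, Fin.snoc_castSucc, hC]
        exact halg.diff_mem (hBF n i) (halg.biUnion_mem _ fun k _ => hBF n k)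
    have hCfcover : ∀ n (x : E), ∃ j, x ∈ Cf n j := by
      intro n x
      by_cases hx : ∃ i : Fin m, x ∈ B n i
      · set s : Finset (Fin m) := Finset.univ.filter (fun i => x ∈ B n i) with hs
        have hsne : s.Nonempty := by
          obtain ⟨i, hi⟩ := hx
          exact ⟨i, by simp [hs, hi]⟩
        set i0 := s.min' hsne with hi0
        have hxi0 : x ∈ B n i0 := (Finset.mem_filter.mp (s.min'_mem hsne)).2
        refine ⟨Fin.castSucc i0, ?_⟩
        simp only [hCf, Fin.snoc_castSucc, hC]
        refine ⟨hxi0, ?_⟩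
        intro hmem
        simp only [Finset.mem_filter, Finset.mem_univ, true_and, mem_iUnion] at hmem
        obtain ⟨k, hk, hxk⟩ := hmem
        have : i0 ≤ k := s.min'_le k (by simp [hs, hxk])
        exact absurd hk (not_lt.mpr this)
      · refine ⟨Fin.last m, ?_⟩
        simp only [hCf, Fin.snoc_last, hRst, mem_compl_iff]
        intro hmem
        obtain ⟨i, _, hxi⟩ := mem_iUnion₂.mp hmem
        exact hx ⟨i, hxi⟩
    have hQ'cond : ∀ n, IsPartition (Finset.image (Cf n) Finset.univ) ∧
        ↑(Finset.image (Cf n) Finset.univ) ⊆ F := by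
      intro n
      refine ⟨⟨?_, ?_⟩, ?_⟩
      · intro S hS T hT hST
        simp only [Finset.coe_image, Finset.coe_univ, image_univ, mem_range] at hS hT
        obtain ⟨i, rfl⟩ := hS
        obtain ⟨j, rfl⟩ := hT
        exact hCfdisj n i j (fun h => hST (by rw [h]))
      · rw [eq_univ_iff_forall]
        intro x
        obtain ⟨j, hj⟩ := hCfcover n x
        exact ⟨Cf n j, by simp, hj⟩
      · intro S hS
        simp only [Finset.coe_image, Finset.coe_univ, image_univ, mem_range] at hS
        obtain ⟨j, rfl⟩ := hS
        exact hCfF n j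
    -- entropy of the constructed partition
    have hent : ∀ n, partRelEntropy P M (Finset.image (Cf n) Finset.univ)
        = ∑ j : Fin (m+1), klT P M (Cf n j) := by
      intro n
      rw [partRelEntropy_eq_sum_klT]
      exact sum_image_pairwiseDisjoint (Cf n) (hCfdisj n) (klT P M) (by simp [klT])
    have hSFge : ∀ n, ((∑ j : Fin (m+1),
        phiR (P (Cf n j)).toReal ((M (Cf n j)).toReal + η) : ℝ) : EReal) ≤ SF := by
      intro n
      calc ((∑ j : Fin (m+1),
          phiR (P (Cf n j)).toReal ((M (Cf n j)).toReal + η) : ℝ) : EReal)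
          = ∑ j : Fin (m+1),
            ((phiR (P (Cf n j)).toReal ((M (Cf n j)).toReal + η) : ℝ) : EReal) :=
            ereal_coe_sum _ _
        _ ≤ ∑ j : Fin (m+1), klT P M (Cf n j) :=
            Finset.sum_le_sum fun j _ => phiR_le_klT P M _ hη
        _ = partRelEntropy P M (Finset.image (Cf n) Finset.univ) := (hent n).symm
        _ ≤ SF := le_iSup₂_of_le (Finset.image (Cf n) Finset.univ) (hQ'cond n) le_rfl
    -- pass to the limit in n
    have hconv : Tendsto (fun n => ∑ j : Fin (m+1),
        phiR (P (Cf n j)).toReal ((M (Cf n j)).toReal + η)) atTop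
        (𝓝 (∑ j : Fin (m+1), phiR (P (Af j)).toReal ((M (Af j)).toReal + η))) := by
      refine tendsto_finset_sum _ fun j _ => tendsto_phiR (hPto j) ?_ ?_
      · exact (hMto j).add_const η
      · have : (0:ℝ) ≤ (M (Af j)).toReal := ENNReal.toReal_nonneg
        linarith
    have htarget : (∑ j : Fin (m+1), phiR (P (Af j)).toReal ((M (Af j)).toReal + η))
        = ∑ i : Fin m, phiR (P (A i)).toReal ((M (A i)).toReal + η) := by
      rw [Fin.sum_univ_castSucc]
      have hlast : phiR (P (Af (Fin.last m))).toReal ((M (Af (Fin.last m))).toReal + η) = 0 := by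
        simp [hAf, Fin.snoc_last, phiR]
      rw [hlast, add_zero]
      exact Finset.sum_congr rfl fun i _ => by rw [hAf, Fin.snoc_castSucc]
    rw [← htarget]
    exact le_of_tendsto (EReal.tendsto_coe.mpr hconv) (Eventually.of_forall hSFge)
  -- conclude: let η → 0
  rw [hrw]
  by_cases htop : ∃ i, P (A i) ≠ 0 ∧ M (A i) = 0
  · -- the left-hand side may be ⊤, but then SF = ⊤ as well
    obtain ⟨i0, hp0, hq0⟩ := htop
    suffices h : SF = ⊤ by rw [h]; exact le_top
    rw [EReal.eq_top_iff_forall_lt]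
    intro r
    have hppos : 0 < (P (A i0)).toReal := ENNReal.toReal_pos hp0 (measure_ne_top _ _)
    have hTtop : Tendsto (fun η : ℝ => phiR (P (A i0)).toReal η) (𝓝[>] (0:ℝ)) atTop := by
      have h1 : Tendsto (fun η : ℝ => (P (A i0)).toReal * Real.log η) (𝓝[>] (0:ℝ)) atBot :=
        Real.tendsto_log_nhdsGT_zero.const_mul_atBot hppos
      have h2 : Tendsto (fun η : ℝ =>
          (P (A i0)).toReal * Real.log (P (A i0)).toReal
            + -((P (A i0)).toReal * Real.log η)) (𝓝[>] (0:ℝ)) atTop :=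
        tendsto_atTop_add_const_left _ _ (tendsto_neg_atBot_atTop.comp h1)
      refine h2.congr fun η => ?_
      unfold phiR
      ring
    have hev : ∀ᶠ η in 𝓝[>] (0:ℝ),
        r + 2*m < phiR (P (A i0)).toReal η ∧ η ∈ Ioo (0:ℝ) 1 :=
      (hTtop.eventually_gt_atTop (r + 2*m)).and
        (eventually_of_mem (Ioo_mem_nhdsGT_of_mem ⟨le_refl (0:ℝ), zero_lt_one⟩) (fun x hx => hx))
    obtain ⟨η, hη1, hη2⟩ := hev.exists
    have hbound : phiR (P (A i0)).toReal η - 2*m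
        ≤ ∑ i : Fin m, phiR (P (A i)).toReal ((M (A i)).toReal + η) := by
      have hterm : ∀ i : Fin m, i ≠ i0 →
          -2 ≤ phiR (P (A i)).toReal ((M (A i)).toReal + η) := by
        intro i _
        have hη0 : 0 < η := hη2.1
        refine phiR_ge_neg_two ENNReal.toReal_nonneg ?_ (by positivity) ?_
        · exact ENNReal.toReal_le_of_le_ofReal zero_le_one (by simpa using prob_le_one)
        · have : (M (A i)).toReal ≤ 1 :=
            ENNReal.toReal_le_of_le_ofReal zero_le_one (by simpa using prob_le_one)
          have := hη2.2.le
          linarith [hη2.2.le]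
      have hi0term : phiR (P (A i0)).toReal η
          = phiR (P (A i0)).toReal ((M (A i0)).toReal + η) := by
        rw [hq0]; simp
      rw [← Finset.add_sum_erase _ _ (Finset.mem_univ i0), ← hi0term]
      have hrest : -2 * ((Finset.univ.erase i0).card : ℝ)
          ≤ ∑ i ∈ Finset.univ.erase i0, phiR (P (A i)).toReal ((M (A i)).toReal + η) := by
        calc -2 * ((Finset.univ.erase i0).card : ℝ)
            = ∑ _i ∈ Finset.univ.erase i0, (-2 : ℝ) := by
              rw [Finset.sum_const, nsmul_eq_mul, mul_comm]
          _ ≤ _ := Finset.sum_le_sum fun i hi =>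
              hterm i (Finset.ne_of_mem_erase hi)
      have hcard : ((Finset.univ.erase i0).card : ℝ) ≤ m := by
        have : (Finset.univ.erase i0).card ≤ (Finset.univ : Finset (Fin m)).card :=
          Finset.card_le_card (Finset.erase_subset _ _)
        simpa using Nat.cast_le.mpr (le_trans this (by simp))
      nlinarith
    have : (r : EReal) < ((∑ i : Fin m,
        phiR (P (A i)).toReal ((M (A i)).toReal + η) : ℝ) : EReal) := by
      rw [EReal.coe_lt_coe_iff]
      have hm0 : (0:ℝ) ≤ 2*m := by positivity
      linarith
    exact lt_of_lt_of_le this (KEY η hη2.1)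
  · -- finite case
    push_neg at htop
    have hfin : ∀ i : Fin m, klT P M (A i)
        = ((phiR (P (A i)).toReal (M (A i)).toReal : ℝ) : EReal) :=
      fun i => klT_eq_phiR P M (A i) (htop i)
    calc ∑ i : Fin m, klT P M (A i)
        = ((∑ i : Fin m, phiR (P (A i)).toReal (M (A i)).toReal : ℝ) : EReal) := by
          rw [ereal_coe_sum]
          exact Finset.sum_congr rfl fun i _ => hfin i
      _ ≤ SF := by
          have hconv : Tendsto (fun η : ℝ =>
              ∑ i : Fin m, phiR (P (A i)).toReal ((M (A i)).toReal + η)) (𝓝[>] (0:ℝ))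
              (𝓝 (∑ i : Fin m, phiR (P (A i)).toReal (M (A i)).toReal)) := by
            refine tendsto_finset_sum _ fun i _ => ?_
            by_cases hp : P (A i) = 0
            · have : (P (A i)).toReal = 0 := by rw [hp]; simp
              rw [this]
              simp only [phiR, zero_mul, sub_zero, zero_sub, neg_zero, sub_self]
              exact tendsto_const_nhds
            · have hq : M (A i) ≠ 0 := htop i hp
              have hqpos : 0 < (M (A i)).toReal := ENNReal.toReal_pos hq (measure_ne_top _ _)
              refine tendsto_phiR tendsto_const_nhds ?_ (ne_of_gt hqpos)
              have : Tendsto (fun η : ℝ => (M (A i)).toReal + η) (𝓝 (0:ℝ))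
                  (𝓝 ((M (A i)).toReal)) := by
                simpa using (tendsto_const_nhds.add tendsto_id :
                  Tendsto (fun η : ℝ => (M (A i)).toReal + η) (𝓝 (0:ℝ))
                    (𝓝 ((M (A i)).toReal + 0)))
              exact this.mono_left nhdsWithin_le_nhds
          refine le_of_tendsto (EReal.tendsto_coe.mpr hconv) ?_
          filter_upwards [self_mem_nhdsWithin] with η hη
          exact KEY η hη
end

section
/- Let f_X be the density of a centered Gaussian N(0, σ²_X) on ℝ, K(L) = ∫_{−L}^{L} f_X(x) dx, and f_{X_L}(x) = f_X(x)·1{|x| ≤ L}/K(L) the truncated Gaussian density. Let f_Z be the density of N(0, σ²_Z) and define g_{Y_L}(y) = ∫_{−L}^{L} f_Z(y − x) f_X(x) dx and f_Y(y) = ∫_ℝ f_Z(y − x) f_X(x) dx. Then as L → ∞: K(L) → 1, g_{Y_L} increases pointwise to f_Y, and ∫_ℝ g_{Y_L}(y) log g_{Y_L}(y) dy → ∫_ℝ f_Y(y) log f_Y(y) dy. -/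
open MeasureTheory Filter Topology

/-- The centered Gaussian density with variance `v`. -/
noncomputable def gaussPdf (v x : ℝ) : ℝ :=
  (Real.sqrt (2 * Real.pi * v))⁻¹ * Real.exp (-(x ^ 2) / (2 * v))

lemma gaussPdf_pos {v : ℝ} (hv : 0 < v) (x : ℝ) : 0 < gaussPdf v x := by
  have h : 0 < 2 * Real.pi * v := by positivity
  exact mul_pos (inv_pos.mpr (Real.sqrt_pos.mpr h)) (Real.exp_pos _)

lemma continuous_gaussPdf (v : ℝ) : Continuous (gaussPdf v) := by
  unfold gaussPdf; fun_prop

lemma gaussPdf_eq (v : ℝ) (x : ℝ) :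
    gaussPdf v x = (Real.sqrt (2 * Real.pi * v))⁻¹ * Real.exp (-((2*v)⁻¹) * x ^ 2) := by
  unfold gaussPdf; ring_nf

lemma integrable_gaussPdf {v : ℝ} (hv : 0 < v) : Integrable (gaussPdf v) := by
  have : Integrable (fun x : ℝ => Real.exp (-((2*v)⁻¹) * x ^ 2)) :=
    integrable_exp_neg_mul_sq (by positivity)
  simpa [funext (gaussPdf_eq v)] using this.const_mul (Real.sqrt (2 * Real.pi * v))⁻¹

lemma integral_gaussPdf {v : ℝ} (hv : 0 < v) : ∫ x : ℝ, gaussPdf v x = 1 := by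
  simp only [funext (gaussPdf_eq v)]
  rw [integral_const_mul, integral_gaussian]
  have h1 : Real.pi / (2*v)⁻¹ = 2 * Real.pi * v := by field_simp
  rw [h1, inv_mul_cancel₀]
  exact ne_of_gt (Real.sqrt_pos.mpr (by positivity))

lemma gaussPdf_mul {vX vZ : ℝ} (hvX : 0 < vX) (hvZ : 0 < vZ) (y x : ℝ) :
    gaussPdf vZ (y - x) * gaussPdf vX x =
      gaussPdf (vX + vZ) y * gaussPdf (vX * vZ / (vX + vZ)) (x - vX * y / (vX + vZ)) := by
  have hs : 0 < vX + vZ := by linarith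
  have e1 : -(y - x) ^ 2 / (2 * vZ) + -x ^ 2 / (2 * vX)
      = -y ^ 2 / (2 * (vX + vZ)) + -(x - vX * y / (vX + vZ)) ^ 2 / (2 * (vX * vZ / (vX + vZ))) := by
    field_simp
    ring
  have e2 : (2 * Real.pi * vZ) * (2 * Real.pi * vX)
      = (2 * Real.pi * (vX + vZ)) * (2 * Real.pi * (vX * vZ / (vX + vZ))) := by
    field_simp
  unfold gaussPdf
  calc (Real.sqrt (2 * Real.pi * vZ))⁻¹ * Real.exp (-(y - x) ^ 2 / (2 * vZ)) *
        ((Real.sqrt (2 * Real.pi * vX))⁻¹ * Real.exp (-x ^ 2 / (2 * vX)))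
      = (Real.sqrt ((2 * Real.pi * vZ) * (2 * Real.pi * vX)))⁻¹ *
        Real.exp (-(y - x) ^ 2 / (2 * vZ) + -x ^ 2 / (2 * vX)) := by
        conv_rhs => rw [Real.sqrt_mul (by positivity), mul_inv, Real.exp_add, mul_mul_mul_comm]
    _ = (Real.sqrt ((2 * Real.pi * (vX + vZ)) * (2 * Real.pi * (vX * vZ / (vX + vZ)))))⁻¹ *
        Real.exp (-y ^ 2 / (2 * (vX + vZ)) + -(x - vX * y / (vX + vZ)) ^ 2 / (2 * (vX * vZ / (vX + vZ)))) := by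
        rw [e1, e2]
    _ = _ := by
        conv_lhs => rw [Real.sqrt_mul (by positivity), mul_inv, Real.exp_add, mul_mul_mul_comm]

lemma abs_mul_log_le {t s : ℝ} (ht : 0 ≤ t) (hts : t ≤ s) :
    |t * Real.log t| ≤ s * |Real.log s| + s := by
  have hs : 0 ≤ s := ht.trans hts
  rcases eq_or_lt_of_le ht with h0 | h0
  · rw [← h0]
    simp only [zero_mul, abs_zero]
    positivity
  have hspos : 0 < s := lt_of_lt_of_le h0 hts
  rw [abs_mul, abs_of_nonneg ht]
  have h1 : |Real.log t| ≤ |Real.log s| + |Real.log (t/s)| := by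
    have hlog : Real.log t = Real.log s + Real.log (t/s) := by
      rw [Real.log_div (ne_of_gt h0) (ne_of_gt hspos)]; ring
    rw [hlog]; exact abs_add_le _ _
  have h2 : t * |Real.log (t/s)| ≤ s := by
    have hts1 : t / s ≤ 1 := (div_le_one hspos).mpr hts
    have hlt : Real.log (t/s) ≤ 0 := Real.log_nonpos (by positivity) hts1
    rw [abs_of_nonpos hlt]
    have hinv : -Real.log (t/s) = Real.log (s/t) := by
      rw [← Real.log_inv]
      congr 1
      field_simp
    rw [hinv]
    have hlsub := Real.log_le_sub_one_of_pos (show 0 < s/t by positivity)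
    calc t * Real.log (s/t) ≤ t * (s/t - 1) :=
          mul_le_mul_of_nonneg_left hlsub ht
      _ = s - t := by field_simp
      _ ≤ s := by linarith
  calc t * |Real.log t| ≤ t * (|Real.log s| + |Real.log (t/s)|) :=
        mul_le_mul_of_nonneg_left h1 ht
    _ = t * |Real.log s| + t * |Real.log (t/s)| := by ring
    _ ≤ s * |Real.log s| + s := by
        have h3 : t * |Real.log s| ≤ s * |Real.log s| :=
          mul_le_mul_of_nonneg_right hts (abs_nonneg _)
        linarith

lemma mul_exp_neg_le_one {u : ℝ} (hu : 0 ≤ u) : u * Real.exp (-u) ≤ 1 := by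
  have h := Real.add_one_le_exp u
  have hp : 0 < Real.exp u := Real.exp_pos u
  rw [Real.exp_neg]
  calc u * (Real.exp u)⁻¹ ≤ Real.exp u * (Real.exp u)⁻¹ :=
        mul_le_mul_of_nonneg_right (by linarith) (by positivity)
    _ = 1 := mul_inv_cancel₀ (ne_of_gt hp)

lemma gauss_entropy_integrable {v : ℝ} (hv : 0 < v) :
    Integrable (fun y => gaussPdf v y * |Real.log (gaussPdf v y)| + gaussPdf v y) := by
  have hπv : 0 < 2 * Real.pi * v := by positivity
  have hcpos : 0 < (Real.sqrt (2 * Real.pi * v))⁻¹ := by positivity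
  set c := (Real.sqrt (2 * Real.pi * v))⁻¹ with hc
  have hG : Integrable
      (fun y : ℝ => (c * (|Real.log c| + 1) + 2 * c) * Real.exp (-(4*v)⁻¹ * y^2)) :=
    (integrable_exp_neg_mul_sq (by positivity)).const_mul _
  apply hG.mono
  · exact (((continuous_gaussPdf v).measurable.mul
      ((Real.measurable_log.comp (continuous_gaussPdf v).measurable).abs)).add
      (continuous_gaussPdf v).measurable).aestronglyMeasurable
  · apply ae_of_all
    intro y
    have hgpos := gaussPdf_pos hv y
    have hgnn := le_of_lt hgpos
    have hgdef : gaussPdf v y = c * Real.exp (-(y ^ 2) / (2 * v)) := rfl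
    have hEpos : 0 < Real.exp (-(y ^ 2) / (2 * v)) := Real.exp_pos _
    have hFpos : 0 < Real.exp (-(4*v)⁻¹ * y^2) := Real.exp_pos _
    have hlog : Real.log (gaussPdf v y) = Real.log c + (-(y ^ 2) / (2 * v)) := by
      rw [hgdef, Real.log_mul (ne_of_gt hcpos) (ne_of_gt hEpos), Real.log_exp]
    have habs : |Real.log (gaussPdf v y)| ≤ |Real.log c| + y ^ 2 / (2 * v) := by
      rw [hlog]
      refine (abs_add_le _ _).trans ?_
      have h5 : |(-(y ^ 2) / (2 * v))| = y ^ 2 / (2 * v) := by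
        rw [abs_div, abs_neg, abs_of_nonneg (sq_nonneg y), abs_of_nonneg (by positivity)]
      rw [h5]
    have hE1 : Real.exp (-(y ^ 2) / (2 * v)) ≤ Real.exp (-(4*v)⁻¹ * y^2) := by
      apply Real.exp_le_exp.mpr
      rw [neg_div, neg_mul, neg_le_neg_iff, inv_mul_eq_div,
        div_le_div_iff₀ (by positivity) (by positivity)]
      nlinarith [sq_nonneg y]
    have hE2 : y ^ 2 * Real.exp (-(y ^ 2) / (2 * v)) ≤ 4 * v * Real.exp (-(4*v)⁻¹ * y^2) := by
      have hsplit : Real.exp (-(y ^ 2) / (2 * v))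
          = Real.exp (-((4*v)⁻¹ * y^2)) * Real.exp (-((4*v)⁻¹ * y^2)) := by
        rw [← Real.exp_add]
        congr 1
        field_simp
        ring
      have hu := mul_exp_neg_le_one (show (0:ℝ) ≤ (4*v)⁻¹ * y^2 by positivity)
      have h4 : (4*v) * ((4*v)⁻¹ * y^2) = y^2 := by field_simp
      have hFpos' : 0 < Real.exp (-((4*v)⁻¹ * y^2)) := Real.exp_pos _
      have hfe : -((4*v)⁻¹ * y^2) = -(4*v)⁻¹ * y^2 := (neg_mul _ _).symm
      calc y ^ 2 * Real.exp (-(y ^ 2) / (2 * v))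
          = (4*v) * (((4*v)⁻¹ * y^2) * Real.exp (-((4*v)⁻¹ * y^2)))
              * Real.exp (-((4*v)⁻¹ * y^2)) := by
            rw [hsplit]
            linear_combination (Real.exp (-((4*v)⁻¹ * y^2)) * Real.exp (-((4*v)⁻¹ * y^2))) * h4.symm
        _ ≤ (4*v) * 1 * Real.exp (-((4*v)⁻¹ * y^2)) := by
            apply mul_le_mul_of_nonneg_right _ (le_of_lt hFpos')
            exact mul_le_mul_of_nonneg_left hu (by positivity)
        _ = 4 * v * Real.exp (-(4*v)⁻¹ * y^2) := by rw [hfe]; ring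
    have hb0 : 0 ≤ gaussPdf v y * |Real.log (gaussPdf v y)| + gaussPdf v y :=
      add_nonneg (mul_nonneg hgnn (abs_nonneg _)) hgnn
    have hA0 : 0 ≤ c * (|Real.log c| + 1) + 2 * c := by
      have := abs_nonneg (Real.log c)
      nlinarith
    rw [Real.norm_eq_abs, Real.norm_eq_abs, abs_of_nonneg hb0,
      abs_of_nonneg (mul_nonneg hA0 (le_of_lt hFpos))]
    calc gaussPdf v y * |Real.log (gaussPdf v y)| + gaussPdf v y
        ≤ gaussPdf v y * (|Real.log c| + y ^ 2 / (2 * v)) + gaussPdf v y := by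
          have := mul_le_mul_of_nonneg_left habs hgnn
          linarith
      _ = c * (|Real.log c| + 1) * Real.exp (-(y ^ 2) / (2 * v))
            + (c / (2*v)) * (y ^ 2 * Real.exp (-(y ^ 2) / (2 * v))) := by
          rw [hgdef]
          field_simp
          ring
      _ ≤ c * (|Real.log c| + 1) * Real.exp (-(4*v)⁻¹ * y^2)
            + (c / (2*v)) * (4 * v * Real.exp (-(4*v)⁻¹ * y^2)) := by
          have b1 := mul_le_mul_of_nonneg_left hE1
            (show (0:ℝ) ≤ c * (|Real.log c| + 1) from
              mul_nonneg (le_of_lt hcpos) (by positivity))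
          have b2 := mul_le_mul_of_nonneg_left hE2
            (show (0:ℝ) ≤ c / (2*v) from div_nonneg (le_of_lt hcpos) (by positivity))
          linarith
      _ = (c * (|Real.log c| + 1) + 2 * c) * Real.exp (-(4*v)⁻¹ * y^2) := by
          field_simp
          ring

/-- Truncated Gaussian limits: with `K(L) = ∫_{-L}^L f_X`, `g_{Y_L}(y) = ∫_{-L}^L
f_Z(y−x) f_X(x) dx` and `f_Y(y) = ∫_ℝ f_Z(y−x) f_X(x) dx`, as `L → ∞` we have `K(L) → 1`,
`g_{Y_L}` increases pointwise to `f_Y`, and `∫ g_{Y_L} log g_{Y_L} → ∫ f_Y log f_Y`. -/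
theorem truncated_gaussian_entropy_limit
    (vX vZ : ℝ) (hvX : 0 < vX) (hvZ : 0 < vZ) :
    Tendsto (fun L : ℝ => ∫ x in (-L)..L, gaussPdf vX x) atTop (𝓝 1) ∧
    (∀ y : ℝ, MonotoneOn
      (fun L : ℝ => ∫ x in (-L)..L, gaussPdf vZ (y - x) * gaussPdf vX x)
      (Set.Ioi (0 : ℝ))) ∧
    (∀ y : ℝ, Tendsto
      (fun L : ℝ => ∫ x in (-L)..L, gaussPdf vZ (y - x) * gaussPdf vX x) atTop
      (𝓝 (∫ x : ℝ, gaussPdf vZ (y - x) * gaussPdf vX x))) ∧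
    Tendsto (fun L : ℝ =>
        ∫ y : ℝ, (∫ x in (-L)..L, gaussPdf vZ (y - x) * gaussPdf vX x) *
          Real.log (∫ x in (-L)..L, gaussPdf vZ (y - x) * gaussPdf vX x)) atTop
      (𝓝 (∫ y : ℝ, (∫ x : ℝ, gaussPdf vZ (y - x) * gaussPdf vX x) *
          Real.log (∫ x : ℝ, gaussPdf vZ (y - x) * gaussPdf vX x))) := by
  have hv : 0 < vX + vZ := by linarith
  have hv' : 0 < vX * vZ / (vX + vZ) := by positivity
  have hint : ∀ y : ℝ, Integrable (fun x => gaussPdf vZ (y - x) * gaussPdf vX x) := by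
    intro y
    simp_rw [gaussPdf_mul hvX hvZ]
    exact ((integrable_gaussPdf hv').comp_sub_right _).const_mul _
  have hconv : ∀ y : ℝ, (∫ x : ℝ, gaussPdf vZ (y - x) * gaussPdf vX x) = gaussPdf (vX + vZ) y := by
    intro y
    simp_rw [gaussPdf_mul hvX hvZ]
    rw [integral_const_mul,
      integral_sub_right_eq_self (fun x => gaussPdf (vX * vZ / (vX + vZ)) x) (vX * y / (vX + vZ)),
      integral_gaussPdf hv', mul_one]
  have hnn : ∀ y x : ℝ, 0 ≤ gaussPdf vZ (y - x) * gaussPdf vX x := fun y x =>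
    le_of_lt (mul_pos (gaussPdf_pos hvZ _) (gaussPdf_pos hvX _))
  have h3 : ∀ y : ℝ, Tendsto
      (fun L : ℝ => ∫ x in (-L)..L, gaussPdf vZ (y - x) * gaussPdf vX x) atTop
      (𝓝 (∫ x : ℝ, gaussPdf vZ (y - x) * gaussPdf vX x)) :=
    fun y => intervalIntegral_tendsto_integral (hint y) tendsto_neg_atTop_atBot tendsto_id
  refine ⟨?_, ?_, h3, ?_⟩
  · have h1 := intervalIntegral_tendsto_integral (μ := volume) (integrable_gaussPdf hvX)
      tendsto_neg_atTop_atBot (tendsto_id (α := ℝ))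
    rwa [integral_gaussPdf hvX] at h1
  · intro y a ha b hb hab
    have ha' : (0:ℝ) < a := ha
    exact intervalIntegral.integral_mono_interval (neg_le_neg hab) (by linarith) hab
      (Eventually.of_forall fun x => hnn y x) ((hint y).intervalIntegrable)
  · -- dominated convergence
    have hle : ∀ L : ℝ, 0 ≤ L → ∀ y : ℝ,
        (∫ x in (-L)..L, gaussPdf vZ (y - x) * gaussPdf vX x)
          ≤ ∫ x : ℝ, gaussPdf vZ (y - x) * gaussPdf vX x := by
      intro L hL y
      rw [intervalIntegral.integral_of_le (by linarith : -L ≤ L)]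
      exact setIntegral_le_integral (hint y) (Eventually.of_forall (hnn y))
    have hge0 : ∀ L : ℝ, 0 ≤ L → ∀ y : ℝ,
        0 ≤ ∫ x in (-L)..L, gaussPdf vZ (y - x) * gaussPdf vX x := by
      intro L hL y
      exact intervalIntegral.integral_nonneg (by linarith) (fun x _ => hnn y x)
    have hfpos : ∀ y : ℝ, 0 < ∫ x : ℝ, gaussPdf vZ (y - x) * gaussPdf vX x := by
      intro y
      rw [hconv y]
      exact gaussPdf_pos hv y
    apply tendsto_integral_filter_of_dominated_convergence
      (bound := fun y => (∫ x : ℝ, gaussPdf vZ (y - x) * gaussPdf vX x) *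
        |Real.log (∫ x : ℝ, gaussPdf vZ (y - x) * gaussPdf vX x)| +
        (∫ x : ℝ, gaussPdf vZ (y - x) * gaussPdf vX x))
    · apply Eventually.of_forall
      intro L
      have hc : Continuous fun y : ℝ => ∫ x in (-L)..L, gaussPdf vZ (y - x) * gaussPdf vX x := by
        apply intervalIntegral.continuous_parametric_intervalIntegral_of_continuous'
        exact ((continuous_gaussPdf vZ).comp (continuous_fst.sub continuous_snd)).mul
          ((continuous_gaussPdf vX).comp continuous_snd)
      exact (hc.measurable.mul (Real.measurable_log.comp hc.measurable)).aestronglyMeasurable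
    · filter_upwards [eventually_ge_atTop (0:ℝ)] with L hL
      apply ae_of_all
      intro y
      rw [Real.norm_eq_abs]
      exact abs_mul_log_le (hge0 L hL y) (hle L hL y)
    · exact (gauss_entropy_integrable hv).congr (ae_of_all _ fun y => by simp only [hconv])
    · apply ae_of_all
      intro y
      exact (h3 y).mul (((Real.continuousAt_log (ne_of_gt (hfpos y))).tendsto).comp (h3 y))
end
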